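/- Let D be a set of coset representatives of GF(q)*/GF(p)* and E any nonempty subset of GF(p)* with |E| = ℓ. Then C_{ED} is a one-weight code with parameters [ℓ(q-1)/(p-1), m], every nonzero codeword having weight ℓ p^{m-1}. -/

import Mathlib

open Finset

theorem stmt3 (p m : ℕ) [Fact p.Prime] (hm : 0 < m)
    (F : Type) [Field F] [Fintype F] [DecidableEq F] [Algebra (ZMod p) F]
    (hcard : Fintype.card F = p ^ m)
    (D : Finset F) (hD0 : (0 : F) ∉ D)
    (hrep : ∀ z : F, z ≠ 0 →
      ∃! d, d ∈ D ∧ ∃ c : ZMod p, c ≠ 0 ∧ z = algebraMap (ZMod p) F c * d)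
    (E : Finset (ZMod p)) (hE0 : (0 : ZMod p) ∉ E) (hEne : E.Nonempty)
    (ED : Finset F)
    (hED : ED = (E ×ˢ D).image fun ed => algebraMap (ZMod p) F ed.1 * ed.2) :
    (p - 1) * ED.card = E.card * (p ^ m - 1) ∧
    Function.Injective (fun x : F => fun d : ED => Algebra.trace (ZMod p) F (x * d.1)) ∧
    ∀ x : F, x ≠ 0 →
      (ED.filter fun d => Algebra.trace (ZMod p) F (x * d) ≠ 0).card
        = E.card * p ^ (m - 1) := by
  have hp : p.Prime := Fact.out
  have hNZ : NeZero p := ⟨hp.ne_zero⟩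
  have hfin : Module.Finite (ZMod p) F := Module.Finite.of_finite
  have hsep : Algebra.IsSeparable (ZMod p) F := inferInstance
  have hamap : Function.Injective (algebraMap (ZMod p) F) := RingHom.injective _
  set φ : ZMod p × F → F := fun ed => algebraMap (ZMod p) F ed.1 * ed.2 with hφ
  have hφne : ∀ c : ZMod p, c ≠ 0 → ∀ d ∈ D, φ (c, d) ≠ 0 := by
    intro c hc d hd
    have hd0 : d ≠ 0 := fun h => hD0 (h ▸ hd)
    exact mul_ne_zero (fun h => hc (hamap (by simpa using h))) hd0
  -- injectivity of φ on (nonzero scalars) × D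
  have hinj : Set.InjOn φ ((univ.erase (0 : ZMod p)) ×ˢ D : Finset (ZMod p × F)) := by
    rintro ⟨c₁, d₁⟩ h1 ⟨c₂, d₂⟩ h2 heq
    simp only [coe_product, Set.mem_prod, mem_coe, mem_erase, mem_univ, and_true] at h1 h2
    obtain ⟨hc₁, hd₁⟩ := h1
    obtain ⟨hc₂, hd₂⟩ := h2
    have hz : φ (c₁, d₁) ≠ 0 := hφne c₁ hc₁ d₁ hd₁
    obtain ⟨d, -, huniq⟩ := hrep _ hz
    have e1 : d₁ = d := huniq d₁ ⟨hd₁, c₁, hc₁, rfl⟩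
    have e2 : d₂ = d := huniq d₂ ⟨hd₂, c₂, hc₂, heq⟩
    have hdd : d₁ = d₂ := e1.trans e2.symm
    subst hdd
    have hd0 : d₁ ≠ 0 := fun h => hD0 (h ▸ hd₁)
    have : algebraMap (ZMod p) F c₁ = algebraMap (ZMod p) F c₂ :=
      mul_right_cancel₀ hd0 heq
    exact Prod.ext (hamap this) rfl
  -- general counting lemma
  have hcount : ∀ (C : Finset (ZMod p)), (0 : ZMod p) ∉ C →
      ∀ (P : F → Prop) (inst : DecidablePred P),
      (∀ c : ZMod p, c ≠ 0 → ∀ z : F, P (algebraMap (ZMod p) F c * z) ↔ P z) →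
      (((C ×ˢ D).image φ).filter P).card = C.card * (D.filter P).card := by
    intro C hC P inst hPinv
    have hsub : (C ×ˢ D : Finset (ZMod p × F)) ⊆ (univ.erase (0 : ZMod p)) ×ˢ D := by
      intro ed hed
      rw [mem_product] at hed ⊢
      exact ⟨mem_erase.2 ⟨fun h => hC (h ▸ hed.1), mem_univ _⟩, hed.2⟩
    rw [Finset.filter_image, card_image_of_injOn (hinj.mono (by
      exact_mod_cast Finset.coe_subset.2 ((filter_subset _ _).trans hsub)))]
    have : (C ×ˢ D).filter (fun ed => P (φ ed)) = C ×ˢ (D.filter P) := by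
      ext ⟨c, d⟩
      simp only [mem_filter, mem_product]
      constructor
      · rintro ⟨⟨hc, hd⟩, hP⟩
        exact ⟨hc, hd, (hPinv c (fun h => hC (h ▸ hc)) d).1 hP⟩
      · rintro ⟨hc, hd, hP⟩
        exact ⟨⟨hc, hd⟩, (hPinv c (fun h => hC (h ▸ hc)) d).2 hP⟩
    rw [this, card_product]
  -- surjectivity
  have himg : ((univ.erase (0 : ZMod p)) ×ˢ D).image φ = univ.erase (0 : F) := by
    ext z
    simp only [mem_image, mem_product, mem_erase, mem_univ, and_true]
    constructor
    · rintro ⟨⟨c, d⟩, ⟨hc, hd⟩, rfl⟩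
      exact hφne c hc d hd
    · intro hz
      obtain ⟨d, ⟨hd, c, hc, hz'⟩, -⟩ := hrep z hz
      exact ⟨⟨c, d⟩, ⟨hc, hd⟩, hz'.symm⟩
  have hcardC0 : (univ.erase (0 : ZMod p)).card = p - 1 := by
    rw [card_erase_of_mem (mem_univ _), card_univ, ZMod.card]
  have hcardF0 : (univ.erase (0 : F)).card = p ^ m - 1 := by
    rw [card_erase_of_mem (mem_univ _), card_univ, hcard]
  -- |D| relation
  have hDcard : (p - 1) * D.card = p ^ m - 1 := by
    have := card_image_of_injOn hinj
    rw [himg, card_product, hcardC0, hcardF0] at this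
    omega
  have hEsub0 : ∀ e ∈ E, e ≠ (0 : ZMod p) := fun e he h => hE0 (h ▸ he)
  -- finrank
  have hfr : Module.finrank (ZMod p) F = m := by
    have := Module.card_eq_pow_finrank (K := ZMod p) (V := F)
    rw [hcard, ZMod.card] at this
    exact (Nat.pow_right_injective hp.two_le this.symm)
  -- key count over all of F
  have hker : ∀ x : F, x ≠ 0 →
      (univ.filter fun z : F => Algebra.trace (ZMod p) F (x * z) ≠ 0).card
        = p ^ m - p ^ (m - 1) := by
    intro x hx
    set T : F →ₗ[ZMod p] ZMod p :=
      (Algebra.trace (ZMod p) F).comp (LinearMap.mulLeft (ZMod p) x) with hT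
    have hTapp : ∀ z, T z = Algebra.trace (ZMod p) F (x * z) := fun z => rfl
    have htr : (Algebra.trace (ZMod p) F : F →ₗ[ZMod p] ZMod p) ≠ 0 :=
      Algebra.trace_ne_zero (ZMod p) F
    obtain ⟨w, hw⟩ := DFunLike.ne_iff.1 htr
    have hTne : T ≠ 0 := by
      intro h
      apply hw
      have := congrFun (congrArg DFunLike.coe h) (x⁻¹ * w)
      simp only [hTapp, LinearMap.zero_apply] at this
      rwa [← mul_assoc, mul_inv_cancel₀ hx, one_mul] at this
    have hsurj : Function.Surjective T := by
      obtain ⟨z, hz⟩ := DFunLike.ne_iff.1 hTne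
      simp only [LinearMap.zero_apply] at hz
      intro a
      exact ⟨(a * (T z)⁻¹) • z, by rw [map_smul, smul_eq_mul, mul_assoc,
        inv_mul_cancel₀ hz, mul_one]⟩
    have hrange : LinearMap.range T = ⊤ := LinearMap.range_eq_top.2 hsurj
    have hfr1 : Module.finrank (ZMod p) (LinearMap.ker T) = m - 1 := by
      have h2 := LinearMap.finrank_range_add_finrank_ker T
      rw [hrange, finrank_top, hfr] at h2
      have : Module.finrank (ZMod p) (ZMod p) = 1 := Module.finrank_self _
      omega
    have : Fintype (LinearMap.ker T) := Fintype.ofFinite _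
    have hkercard : Fintype.card (LinearMap.ker T) = p ^ (m - 1) := by
      rw [Module.card_eq_pow_finrank (K := ZMod p) (V := LinearMap.ker T),
        ZMod.card, hfr1]
    have h0 : (univ.filter fun z : F => Algebra.trace (ZMod p) F (x * z) = 0).card
        = p ^ (m - 1) := by
      rw [← hkercard, ← Fintype.card_subtype]
      apply Fintype.card_congr
      exact Equiv.subtypeEquivRight (fun z => by
        rw [LinearMap.mem_ker, hTapp])
    have := Finset.card_filter_add_card_filter_not
      (s := (univ : Finset F)) (p := fun z => Algebra.trace (ZMod p) F (x * z) = 0)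
    rw [card_univ, hcard, h0] at this
    have heq : (univ.filter fun z : F => ¬ Algebra.trace (ZMod p) F (x * z) = 0).card
        = (univ.filter fun z : F => Algebra.trace (ZMod p) F (x * z) ≠ 0).card := rfl
    omega
  -- count over D
  have hDfilter : ∀ x : F, x ≠ 0 →
      (D.filter fun d => Algebra.trace (ZMod p) F (x * d) ≠ 0).card = p ^ (m - 1) := by
    intro x hx
    have hPinv : ∀ c : ZMod p, c ≠ 0 → ∀ z : F,
        (Algebra.trace (ZMod p) F (x * (algebraMap (ZMod p) F c * z)) ≠ 0
          ↔ Algebra.trace (ZMod p) F (x * z) ≠ 0) := by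
      intro c hc z
      have : x * (algebraMap (ZMod p) F c * z) = c • (x * z) := by
        rw [Algebra.smul_def]; ring
      rw [this, map_smul, smul_eq_mul]
      simp [hc]
    have hc0 : (0 : ZMod p) ∉ univ.erase (0 : ZMod p) := fun h => (mem_erase.1 h).1 rfl
    have := hcount (univ.erase (0 : ZMod p)) hc0
      (fun z => Algebra.trace (ZMod p) F (x * z) ≠ 0) (by infer_instance) hPinv
    rw [himg] at this
    have hfe : (univ.erase (0 : F)).filter (fun z => Algebra.trace (ZMod p) F (x * z) ≠ 0)
        = univ.filter (fun z => Algebra.trace (ZMod p) F (x * z) ≠ 0) := by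
      ext z
      simp only [mem_filter, mem_erase, mem_univ, true_and, and_true]
      constructor
      · tauto
      · intro hz
        refine ⟨fun h => hz ?_, hz⟩
        rw [h, mul_zero, map_zero]
    rw [hfe, hker x hx, hcardC0] at this
    have hpow : p ^ m - p ^ (m - 1) = (p - 1) * p ^ (m - 1) := by
      obtain ⟨k, rfl⟩ : ∃ k, m = k + 1 := ⟨m - 1, by omega⟩
      rw [Nat.add_sub_cancel, Nat.sub_mul, one_mul, pow_succ, mul_comm]
    rw [hpow] at this
    have hp1 : 0 < p - 1 := by have := hp.two_le; omega
    exact (Nat.eq_of_mul_eq_mul_left hp1 this.symm)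
  -- part 3
  have part3 : ∀ x : F, x ≠ 0 →
      (ED.filter fun d => Algebra.trace (ZMod p) F (x * d) ≠ 0).card
        = E.card * p ^ (m - 1) := by
    intro x hx
    have hPinv : ∀ c : ZMod p, c ≠ 0 → ∀ z : F,
        (Algebra.trace (ZMod p) F (x * (algebraMap (ZMod p) F c * z)) ≠ 0
          ↔ Algebra.trace (ZMod p) F (x * z) ≠ 0) := by
      intro c hc z
      have : x * (algebraMap (ZMod p) F c * z) = c • (x * z) := by
        rw [Algebra.smul_def]; ring
      rw [this, map_smul, smul_eq_mul]
      simp [hc]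
    have := hcount E hE0 (fun z => Algebra.trace (ZMod p) F (x * z) ≠ 0)
      (by infer_instance) hPinv
    rw [← hED] at this
    rw [this, hDfilter x hx]
  refine ⟨?_, ?_, part3⟩
  · have hEDcard : ED.card = E.card * D.card := by
      rw [hED, card_image_of_injOn (hinj.mono ?_), card_product]
      intro ed hed
      rw [mem_coe, mem_product] at hed
      rw [coe_product, Set.mem_prod]
      exact ⟨mem_coe.2 (mem_erase.2 ⟨hEsub0 _ hed.1, mem_univ _⟩), mem_coe.2 hed.2⟩
    rw [hEDcard, ← Nat.mul_assoc, Nat.mul_comm (p-1) E.card, Nat.mul_assoc, hDcard]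
  · intro x y hxy
    by_contra hne
    have hz : x - y ≠ 0 := sub_ne_zero.2 hne
    have h3 := part3 (x - y) hz
    have hpos : 0 < (ED.filter fun d => Algebra.trace (ZMod p) F ((x - y) * d) ≠ 0).card := by
      rw [h3]
      exact Nat.mul_pos (card_pos.2 hEne) (pow_pos hp.pos _)
    obtain ⟨d, hd⟩ := card_pos.1 hpos
    rw [mem_filter] at hd
    apply hd.2
    have := congrFun hxy ⟨d, hd.1⟩
    simp only at this
    rw [sub_mul, map_sub, this, sub_self]
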